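/- arXiv:1903.06578 — 8 statements merged into one kernel-verified Lean document; each statement's English description precedes it below -/
import Mathlib

section
/- Let J be an m×m complex matrix and let B be the 2m×2m complex block matrix B = fromBlocks 0 J Jᵀ 0 (zero diagonal blocks, top-right block J, bottom-left block Jᵀ). Then the characteristic polynomial of B·Bᴴ equals the square of the characteristic polynomial of J·Jᴴ. Consequently every eigenvalue of B·Bᴴ — i.e. every squared singular value of B, and hence every squeezing eigenvalue of a twin-beam Gaussian transformation — occurs with even multiplicity, in particular with multiplicity at least two. -/
open Matrix Polynomial

private lemma det_one_add_mul_comm' {n : ℕ} {α : Type*} [CommRing α]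
    (A B : Matrix (Fin n) (Fin n) α) :
    Matrix.det (1 + A * B) = Matrix.det (1 + B * A) := by
  calc Matrix.det (1 + A * B)
      = Matrix.det (Matrix.fromBlocks 1 (-A) B 1) := by
        rw [Matrix.det_fromBlocks_one₂₂]; simp [Matrix.neg_mul]
    _ = Matrix.det (1 + B * A) := by
        rw [Matrix.det_fromBlocks_one₁₁]; simp [Matrix.mul_neg]

private lemma eval_charpoly' {n : ℕ} (M : Matrix (Fin n) (Fin n) ℂ) (r : ℂ) :
    M.charpoly.eval r = (r • (1 : Matrix (Fin n) (Fin n) ℂ) - M).det := by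
  rw [Matrix.charpoly, ← Polynomial.coe_evalRingHom, RingHom.map_det]
  congr 1
  ext i j
  by_cases h : i = j <;>
    simp [h, Matrix.charmatrix_apply, Matrix.diagonal_apply, Matrix.one_apply,
      Matrix.sub_apply, Matrix.smul_apply]

private lemma charpoly_mul_comm' {n : ℕ} (A B : Matrix (Fin n) (Fin n) ℂ) :
    (A * B).charpoly = (B * A).charpoly := by
  have key : ∀ r : ℂ, r ≠ 0 → (A * B).charpoly.eval r = (B * A).charpoly.eval r := by
    intro r hr
    rw [eval_charpoly', eval_charpoly']
    have h1 : r • (1 : Matrix (Fin n) (Fin n) ℂ) - A * B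
        = r • ((1 : Matrix (Fin n) (Fin n) ℂ) + (-(r⁻¹ • A)) * B) := by
      rw [smul_add, sub_eq_add_neg]
      congr 1
      rw [Matrix.neg_mul, Matrix.smul_mul, smul_neg, smul_smul, mul_inv_cancel₀ hr, one_smul]
    have h2 : r • (1 : Matrix (Fin n) (Fin n) ℂ) - B * A
        = r • ((1 : Matrix (Fin n) (Fin n) ℂ) + B * (-(r⁻¹ • A))) := by
      rw [smul_add, sub_eq_add_neg]
      congr 1
      rw [Matrix.mul_neg, Matrix.mul_smul, smul_neg, smul_smul, mul_inv_cancel₀ hr, one_smul]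
    rw [h1, h2, Matrix.det_smul, Matrix.det_smul, det_one_add_mul_comm']
  have : (A * B).charpoly - (B * A).charpoly = 0 := by
    apply Polynomial.eq_zero_of_infinite_isRoot
    apply Set.Infinite.mono (s := {(0 : ℂ)}ᶜ)
    · intro x hx
      simp only [Set.mem_setOf_eq, Polynomial.IsRoot, Polynomial.eval_sub]
      rw [key x hx, sub_self]
    · exact (Set.finite_singleton (0 : ℂ)).infinite_compl
  linear_combination this

private lemma charpoly_transpose' {n : ℕ} (M : Matrix (Fin n) (Fin n) ℂ) :
    Mᵀ.charpoly = M.charpoly := by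
  rw [Matrix.charpoly, Matrix.charpoly, ← Matrix.det_transpose (Matrix.charmatrix M)]
  congr 1
  ext i j
  by_cases h : i = j <;>
    simp [h, Matrix.charmatrix_apply, Matrix.diagonal_apply, Matrix.transpose_apply,
      Ne.symm, eq_comm]

/-- For the twin-beam block matrix `B = fromBlocks 0 J Jᵀ 0`, the characteristic polynomial of
`B * Bᴴ` is the square of that of `J * Jᴴ`; consequently every eigenvalue of `B * Bᴴ`
(every squared singular value of `B`) has even root multiplicity, in particular at least two. -/
theorem twin_beam_charpoly_sq (m : ℕ) (J : Matrix (Fin m) (Fin m) ℂ)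
    (B : Matrix (Fin m ⊕ Fin m) (Fin m ⊕ Fin m) ℂ)
    (hB : B = Matrix.fromBlocks 0 J Jᵀ 0) :
    (B * Bᴴ).charpoly = ((J * Jᴴ).charpoly) ^ 2 ∧
      ∀ μ : ℂ, Even ((B * Bᴴ).charpoly.rootMultiplicity μ) := by
  have hmain : (B * Bᴴ).charpoly = ((J * Jᴴ).charpoly) ^ 2 := by
    subst hB
    have hconj : (Matrix.fromBlocks (0 : Matrix (Fin m) (Fin m) ℂ) J Jᵀ 0)ᴴ
        = Matrix.fromBlocks 0 (Jᵀ)ᴴ Jᴴ 0 := by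
      simp [Matrix.fromBlocks_conjTranspose]
    rw [hconj, Matrix.fromBlocks_multiply]
    simp only [Matrix.zero_mul, Matrix.mul_zero, add_zero, zero_add]
    rw [Matrix.charpoly_fromBlocks_zero₁₂]
    have h3 : Jᵀ * (Jᵀ)ᴴ = (Jᴴ * J)ᵀ := by
      rw [Matrix.transpose_mul]
      congr 1
    rw [h3, charpoly_transpose', charpoly_mul_comm', sq]
  refine ⟨hmain, fun μ => ?_⟩
  rw [hmain, sq]
  have hne : (J * Jᴴ).charpoly ≠ 0 := (Matrix.charpoly_monic _).ne_zero
  rw [Polynomial.rootMultiplicity_mul (mul_ne_zero hne hne)]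
  exact ⟨_, rfl⟩
end

section
/- Let J, C, D be m×m complex matrices with C and D unitary, let R be an m×m diagonal matrix with real nonnegative diagonal entries, and suppose −iJ = C·R·Dᴴ. Define the 2m×2m matrix X = (1/√2)·fromBlocks 1 (i·1) 1 (−i·1) (blocks are scalar multiples of the m×m identity) and V = (fromBlocks C 0 0 (conj D))·X. Then V is unitary and −i·(fromBlocks 0 J Jᵀ 0) = V·(fromBlocks R 0 0 R)·Vᵀ. In particular this is a Takagi factorization of the squeezing matrix of twin beams in which the diagonal matrix fromBlocks R 0 0 R contains each singular value of −iJ exactly twice. -/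
open Matrix

/-- Takagi factorization of the squeezing matrix of twin beams: with `−iJ = C·R·Dᴴ` an SVD,
`X = (1/√2)·fromBlocks 1 (i·1) 1 (−i·1)` and `V = (fromBlocks C 0 0 (conj D))·X`, the matrix `V`
is unitary and `−i·(fromBlocks 0 J Jᵀ 0) = V·(fromBlocks R 0 0 R)·Vᵀ`, the diagonal matrix
`fromBlocks R 0 0 R` containing each singular value of `−iJ` exactly twice. -/
theorem twin_beam_takagi_factorization (m : ℕ)
    (J C D : Matrix (Fin m) (Fin m) ℂ)
    (hC : C ∈ Matrix.unitaryGroup (Fin m) ℂ)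
    (hD : D ∈ Matrix.unitaryGroup (Fin m) ℂ)
    (r : Fin m → ℝ) (hr : ∀ i, 0 ≤ r i)
    (R : Matrix (Fin m) (Fin m) ℂ)
    (hR : R = Matrix.diagonal fun i => (r i : ℂ))
    (hSVD : (-Complex.I) • J = C * R * Dᴴ)
    (X V : Matrix (Fin m ⊕ Fin m) (Fin m ⊕ Fin m) ℂ)
    (hX : X = ((1 : ℂ) / Real.sqrt 2) •
      Matrix.fromBlocks 1 (Complex.I • 1) 1 ((-Complex.I) • 1))
    (hV : V = (Matrix.fromBlocks C 0 0 (D.map (starRingEnd ℂ))) * X) :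
    V ∈ Matrix.unitaryGroup (Fin m ⊕ Fin m) ℂ ∧
    (-Complex.I) • Matrix.fromBlocks 0 J Jᵀ 0 =
      V * (Matrix.fromBlocks R 0 0 R) * Vᵀ := by
  set c : ℂ := (1 : ℂ) / Real.sqrt 2 with hcdef
  have hc : c * c = 1 / 2 := by
    rw [hcdef, div_mul_div_comm, one_mul, ← Complex.ofReal_mul,
      Real.mul_self_sqrt (by norm_num)]
    norm_num
  have hcs : star c = c := by
    rw [hcdef, Complex.star_def]
    simp [map_div₀, Complex.conj_ofReal]
  set E : Matrix (Fin m) (Fin m) ℂ := D.map (starRingEnd ℂ) with hEdef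
  set M : Matrix (Fin m ⊕ Fin m) (Fin m ⊕ Fin m) ℂ :=
    Matrix.fromBlocks 1 (Complex.I • 1) 1 ((-Complex.I) • 1) with hMdef
  set B : Matrix (Fin m ⊕ Fin m) (Fin m ⊕ Fin m) ℂ :=
    Matrix.fromBlocks C 0 0 E with hBdef
  have hCC : C * Cᴴ = 1 := by
    have := (Matrix.mem_unitaryGroup_iff).1 hC
    rwa [Matrix.star_eq_conjTranspose] at this
  have hDD : D * Dᴴ = 1 := by
    have := (Matrix.mem_unitaryGroup_iff).1 hD
    rwa [Matrix.star_eq_conjTranspose] at this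
  have hEH : Eᴴ = Dᵀ := by
    ext i j
    simp [hEdef, Matrix.conjTranspose_apply, Matrix.map_apply]
  have hET : Eᵀ = Dᴴ := by
    ext i j
    simp [hEdef, Matrix.conjTranspose_apply, Matrix.map_apply]
  have hEE : E * Eᴴ = 1 := by
    rw [hEH]
    have h : Dᵀ = Dᴴ.map (starRingEnd ℂ) := by
      ext i j
      simp [Matrix.conjTranspose_apply, Matrix.map_apply]
    rw [h, hEdef, ← Matrix.map_mul, hDD]
    simp
  have hRT : Rᵀ = R := by rw [hR, Matrix.diagonal_transpose]
  have hMH : Mᴴ = Matrix.fromBlocks 1 1 ((-Complex.I) • 1) (Complex.I • 1) := by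
    rw [hMdef, Matrix.fromBlocks_conjTranspose]
    simp [Matrix.conjTranspose_smul, Complex.star_def, Complex.conj_I]
  have hMT : Mᵀ = Matrix.fromBlocks 1 1 (Complex.I • 1) ((-Complex.I) • 1) := by
    rw [hMdef, Matrix.fromBlocks_transpose]
    simp [Matrix.transpose_smul]
  have hMM : M * Mᴴ = (2 : ℂ) • 1 := by
    rw [hMH, hMdef, Matrix.fromBlocks_multiply]
    have h2 : (2 : ℂ) • (1 : Matrix (Fin m ⊕ Fin m) (Fin m ⊕ Fin m) ℂ) =
        Matrix.fromBlocks ((2 : ℂ) • 1) ((2 : ℂ) • 0) ((2 : ℂ) • 0) ((2 : ℂ) • 1) := by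
      rw [← Matrix.fromBlocks_smul, Matrix.fromBlocks_one]
    rw [h2, Matrix.fromBlocks_inj]
    refine ⟨?_, ?_, ?_, ?_⟩ <;>
      simp only [Matrix.smul_mul, Matrix.mul_smul, smul_smul, Matrix.mul_one,
        Matrix.one_mul, Complex.I_mul_I, neg_mul, mul_neg, neg_neg, neg_smul,
        one_smul, smul_zero] <;>
      module
  have hXX : (c • M) * (c • M)ᴴ = 1 := by
    rw [Matrix.conjTranspose_smul, hcs, Matrix.smul_mul, Matrix.mul_smul, smul_smul, hc,
      hMM, smul_smul]
    norm_num
  have hBB : B * Bᴴ = 1 := by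
    rw [hBdef, Matrix.fromBlocks_conjTranspose]
    simp [Matrix.fromBlocks_multiply, hCC, hEE, Matrix.fromBlocks_one]
  have hVU : V ∈ Matrix.unitaryGroup (Fin m ⊕ Fin m) ℂ := by
    rw [Matrix.mem_unitaryGroup_iff, Matrix.star_eq_conjTranspose, hV, hX,
      Matrix.conjTranspose_mul]
    calc B * (c • M) * ((c • M)ᴴ * Bᴴ) = B * ((c • M) * (c • M)ᴴ) * Bᴴ := by
          simp only [Matrix.mul_assoc]
      _ = 1 := by rw [hXX, Matrix.mul_one, hBB]
  refine ⟨hVU, ?_⟩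
  have hMRM : M * Matrix.fromBlocks R 0 0 R * Mᵀ =
      Matrix.fromBlocks 0 ((2 : ℂ) • R) ((2 : ℂ) • R) 0 := by
    rw [hMT, hMdef, Matrix.fromBlocks_multiply, Matrix.fromBlocks_multiply,
      Matrix.fromBlocks_inj]
    refine ⟨?_, ?_, ?_, ?_⟩ <;>
      simp only [Matrix.smul_mul, Matrix.mul_smul, smul_smul, Matrix.mul_one,
        Matrix.one_mul, Matrix.mul_zero, Matrix.zero_mul, add_zero, zero_add,
        Complex.I_mul_I, neg_mul, mul_neg, neg_neg, neg_smul, one_smul, smul_zero] <;>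
      module
  have hblTR : C * R * Eᵀ = (-Complex.I) • J := by rw [hET, ← hSVD]
  have hblBL : E * R * Cᵀ = (-Complex.I) • Jᵀ := by
    have h := congrArg Matrix.transpose hSVD
    rw [Matrix.transpose_smul, Matrix.transpose_mul, Matrix.transpose_mul, hRT] at h
    have hDHT : Dᴴᵀ = E := by
      ext i j
      simp [hEdef, Matrix.conjTranspose_apply, Matrix.map_apply]
    rw [h, hDHT, Matrix.mul_assoc]
  have hVT : Vᵀ = c • (Mᵀ * Bᵀ) := by
    rw [hV, hX, Matrix.transpose_mul, Matrix.transpose_smul, Matrix.smul_mul]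
  calc (-Complex.I) • Matrix.fromBlocks 0 J Jᵀ 0
      = Matrix.fromBlocks 0 ((-Complex.I) • J) ((-Complex.I) • Jᵀ) 0 := by
        rw [Matrix.fromBlocks_smul, smul_zero]
    _ = Matrix.fromBlocks 0 (C * R * Eᵀ) (E * R * Cᵀ) 0 := by rw [hblTR, hblBL]
    _ = B * Matrix.fromBlocks 0 R R 0 * Bᵀ := by
        rw [hBdef, Matrix.fromBlocks_transpose, Matrix.fromBlocks_multiply,
          Matrix.fromBlocks_multiply]
        simp [Matrix.mul_assoc]
    _ = ((1 : ℂ) / 2) • ((2 : ℂ) • (B * Matrix.fromBlocks 0 R R 0 * Bᵀ)) := by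
        rw [smul_smul]; norm_num
    _ = ((1 : ℂ) / 2) • (B * Matrix.fromBlocks 0 ((2 : ℂ) • R) ((2 : ℂ) • R) 0 * Bᵀ) := by
        congr 1
        have h4 : Matrix.fromBlocks 0 ((2 : ℂ) • R) ((2 : ℂ) • R) 0 =
            (2 : ℂ) • Matrix.fromBlocks 0 R R 0 := by
          rw [Matrix.fromBlocks_smul, smul_zero]
        rw [h4, Matrix.mul_smul, Matrix.smul_mul]
    _ = (c * c) • (B * (M * Matrix.fromBlocks R 0 0 R * Mᵀ) * Bᵀ) := by
        rw [hc, hMRM]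
    _ = V * Matrix.fromBlocks R 0 0 R * Vᵀ := by
        rw [hVT, hV, hX]
        simp only [Matrix.mul_smul, Matrix.smul_mul, smul_smul]
        congr 1
        simp only [Matrix.mul_assoc]
end

section
/- Let η and ξ be real numbers with |η| < 1, and set K(x,y) = (1/√π)·exp(−(x²+y²)/(2w) + ((η+iξ)/w)·x·y). Then for every real x and every complex t, the integral ∫_{ℝ} K(x,y)·exp(2·y·t − t² − y²/2 − i·ζ·y²) dy converges and equals p_c·exp(−x²/2 + i·ζ·x²)·exp(2·q_c·x·t − q_c²·t²). -/
open Complex MeasureTheory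

private lemma aux_cpow_half (r : ℝ) (hr : 0 < r) (z : ℂ) :
    ((r : ℂ) * z) ^ ((1 : ℂ)/2) = (Real.sqrt r : ℂ) * z ^ ((1 : ℂ)/2) := by
  have hsq : (Real.sqrt r : ℂ) = Complex.exp ((Real.log r : ℂ) / 2) := by
    rw [Real.sqrt_eq_rpow, Real.rpow_def_of_pos hr, Complex.ofReal_exp]
    congr 1
    push_cast
    ring
  rcases eq_or_ne z 0 with rfl | hz
  · simp [Complex.zero_cpow (by norm_num : (1:ℂ)/2 ≠ 0)]
  · have hr0 : (r : ℂ) ≠ 0 := by exact_mod_cast hr.ne'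
    rw [Complex.cpow_def_of_ne_zero (mul_ne_zero hr0 hz), Complex.cpow_def_of_ne_zero hz,
      Complex.log_ofReal_mul hr hz, hsq, ← Complex.exp_add]
    congr 1
    ring

set_option maxHeartbeats 2000000 in
/-- The generating-function Gaussian integral used to prove the complex Mehler formula:
for the kernel `K(x,y) = (1/√π)·exp(−(x²+y²)/(2w) + ((η+iξ)/w)xy)`, the integral
`∫ K(x,y)·exp(2yt − t² − y²/2 − iζy²) dy` converges and equals
`p_c·exp(−x²/2 + iζx²)·exp(2q_c·x·t − q_c²·t²)`. -/
theorem complex_mehler_generating_integral (η ξ : ℝ) (hη : |η| < 1)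
    (w : ℝ) (hw : w = Real.sqrt ((1 + ξ ^ 2) * (1 - η ^ 2)))
    (ζ : ℝ) (hζ : ζ = η * ξ / (2 * w))
    (qc : ℂ) (hqc : qc = ((η : ℂ) + (ξ : ℂ) * Complex.I) /
      (1 + (w : ℂ) + (η : ℂ) * (ξ : ℂ) * Complex.I))
    (pc : ℂ) (hpc : pc = (2 * (w : ℂ) /
      (1 + (w : ℂ) + (η : ℂ) * (ξ : ℂ) * Complex.I)) ^ ((1 : ℂ) / 2))
    (K : ℝ → ℝ → ℂ)
    (hK : ∀ x y : ℝ, K x y = ((1 : ℂ) / Real.sqrt Real.pi) *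
      Complex.exp (-((x : ℂ) ^ 2 + (y : ℂ) ^ 2) / (2 * (w : ℂ)) +
        (((η : ℂ) + (ξ : ℂ) * Complex.I) / (w : ℂ)) * (x : ℂ) * (y : ℂ)))
    (x : ℝ) (t : ℂ) :
    MeasureTheory.Integrable
      (fun y : ℝ => K x y *
        Complex.exp (2 * (y : ℂ) * t - t ^ 2 - (y : ℂ) ^ 2 / 2 -
          Complex.I * (ζ : ℂ) * (y : ℂ) ^ 2)) ∧
    ∫ y : ℝ, K x y *
        Complex.exp (2 * (y : ℂ) * t - t ^ 2 - (y : ℂ) ^ 2 / 2 -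
          Complex.I * (ζ : ℂ) * (y : ℂ) ^ 2) =
      pc * Complex.exp (-(x : ℂ) ^ 2 / 2 + Complex.I * (ζ : ℂ) * (x : ℂ) ^ 2) *
        Complex.exp (2 * qc * (x : ℂ) * t - qc ^ 2 * t ^ 2) := by
  have hη2 : (0:ℝ) < 1 - η ^ 2 := by
    have h := abs_lt.mp hη
    nlinarith
  have hprod : (0:ℝ) < (1 + ξ ^ 2) * (1 - η ^ 2) := by positivity
  have hwpos : 0 < w := by rw [hw]; exact Real.sqrt_pos.mpr hprod
  have hwne : (w : ℂ) ≠ 0 := by exact_mod_cast hwpos.ne'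
  have hw2 : (w : ℂ) ^ 2 = (1 + (ξ:ℂ) ^ 2) * (1 - (η:ℂ) ^ 2) := by
    have hr : w ^ 2 = (1 + ξ ^ 2) * (1 - η ^ 2) := by
      rw [hw, Real.sq_sqrt hprod.le]
    exact_mod_cast congrArg (Complex.ofReal) hr
  have hζc : (ζ : ℂ) = (η:ℂ) * ξ / (2 * w) := by
    rw [hζ]; push_cast; ring
  set D : ℂ := 1 + (w : ℂ) + (η : ℂ) * (ξ : ℂ) * Complex.I with hD
  have hDne : D ≠ 0 := by
    intro h
    have := congrArg Complex.re h
    simp [hD] at this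
    nlinarith
  set b : ℂ := -D / (2 * w) with hb
  have hb' : b = ((-(1 + w) / (2 * w) : ℝ) : ℂ) + ((-(η * ξ) / (2 * w) : ℝ) : ℂ) * Complex.I := by
    rw [hb, hD]
    push_cast
    field_simp
    ring
  have hbre : b.re < 0 := by
    rw [hb']
    simp only [Complex.add_re, Complex.ofReal_re, Complex.mul_re, Complex.I_re, Complex.I_im,
      Complex.ofReal_im, mul_zero, mul_one, zero_sub, zero_mul, sub_zero]
    have : -(1 + w) / (2 * w) < 0 := div_neg_of_neg_of_pos (by linarith) (by linarith)
    linarith [this]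
  set c : ℂ := (((η : ℂ) + (ξ : ℂ) * Complex.I) / (w : ℂ)) * (x : ℂ) + 2 * t with hc
  set d : ℂ := -(x : ℂ) ^ 2 / (2 * w) - t ^ 2 with hd
  have hfun : ∀ y : ℝ, K x y *
      Complex.exp (2 * (y : ℂ) * t - t ^ 2 - (y : ℂ) ^ 2 / 2 -
        Complex.I * (ζ : ℂ) * (y : ℂ) ^ 2) =
      ((1 : ℂ) / Real.sqrt Real.pi) * Complex.exp (b * (y:ℂ) ^ 2 + c * (y:ℂ) + d) := by
    intro y
    rw [hK, mul_assoc, ← Complex.exp_add]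
    congr 2
    rw [hζc, hb, hc, hd, hD]
    field_simp
    ring
  have hInt : Integrable (fun y : ℝ => Complex.exp (b * (y:ℂ) ^ 2 + c * (y:ℂ) + d)) :=
    integrable_cexp_quadratic' hbre c d
  constructor
  · have := hInt.const_mul ((1 : ℂ) / Real.sqrt Real.pi)
    exact this.congr (by filter_upwards with y using (hfun y).symm)
  · have hπb : ((Real.pi : ℂ) / -b) = (Real.pi : ℂ) * (2 * w / D) := by
      rw [hb]
      field_simp
    have hsπ : ((Real.sqrt Real.pi : ℝ) : ℂ) ≠ 0 := by
      exact_mod_cast (Real.sqrt_pos.mpr Real.pi_pos).ne'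
    have hqcD : qc = ((η : ℂ) + (ξ : ℂ) * Complex.I) / D := hqc
    have hexp : d - c ^ 2 / (4 * b) =
        (-(x : ℂ) ^ 2 / 2 + Complex.I * (ζ : ℂ) * (x : ℂ) ^ 2) +
        (2 * qc * (x : ℂ) * t - qc ^ 2 * t ^ 2) := by
      have hbne : b ≠ 0 := by
        intro h; rw [h] at hbre; simp at hbre
      have h1 : c ^ 2 / (4 * b) = -(w * c ^ 2) / (2 * D) := by
        rw [div_eq_div_iff (by simp [hb, hbne, hDne, hwpos.ne'] : (4:ℂ) * b ≠ 0)
          (mul_ne_zero two_ne_zero hDne)]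
        rw [hb]
        field_simp
        ring
      rw [h1, hζc, hqcD, hc, hd, hD]
      rw [hD] at hDne
      field_simp
      linear_combination ((x:ℂ)^2 * (1 + (w:ℂ) + (η:ℂ) * (ξ:ℂ) * Complex.I) + 2 * (w:ℂ) * t^2) * hw2 + ((x:ℂ)^2 * (1 + (w:ℂ) + (η:ℂ) * (ξ:ℂ) * Complex.I) + 2 * (w:ℂ) * t^2) * (ξ:ℂ)^2 * (1 - (η:ℂ)^2) * Complex.I_sq
    calc ∫ y : ℝ, K x y *
        Complex.exp (2 * (y : ℂ) * t - t ^ 2 - (y : ℂ) ^ 2 / 2 -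
          Complex.I * (ζ : ℂ) * (y : ℂ) ^ 2)
        = ∫ y : ℝ, ((1 : ℂ) / Real.sqrt Real.pi) *
            Complex.exp (b * (y:ℂ) ^ 2 + c * (y:ℂ) + d) := by
          simp only [hfun]
      _ = ((1 : ℂ) / Real.sqrt Real.pi) *
            ∫ y : ℝ, Complex.exp (b * (y:ℂ) ^ 2 + c * (y:ℂ) + d) := by
          rw [MeasureTheory.integral_const_mul]
      _ = ((1 : ℂ) / Real.sqrt Real.pi) *
            (((Real.pi : ℂ) / -b) ^ ((1:ℂ)/2) * Complex.exp (d - c ^ 2 / (4 * b))) := by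
          rw [integral_cexp_quadratic hbre]
      _ = pc * Complex.exp (-(x : ℂ) ^ 2 / 2 + Complex.I * (ζ : ℂ) * (x : ℂ) ^ 2) *
            Complex.exp (2 * qc * (x : ℂ) * t - qc ^ 2 * t ^ 2) := by
          rw [hπb, aux_cpow_half Real.pi Real.pi_pos, ← hpc, hexp, Complex.exp_add]
          field_simp
end

section
/- Let η and ξ be real numbers with |η| < 1. Then the squared modulus of q_c equals (1 + ξ² − w)/(1 + ξ² + w), i.e. |q_c|² = (η² + ξ²)/((1+w)² + η²ξ²) = (1 + ξ² − w)/(1 + ξ² + w), and in particular |q_c| < 1. Writing q₀ = w/(1+ξ²) = Real.sqrt((1−η²)/(1+ξ²)), this says |q_c|² = (1−q₀)/(1+q₀). -/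
open Complex

/-- Squared modulus of `q_c = (η+iξ)/(1+w+iηξ)`:
`|q_c|² = (η²+ξ²)/((1+w)²+η²ξ²) = (1+ξ²−w)/(1+ξ²+w) = (1−q₀)/(1+q₀)` with
`q₀ = w/(1+ξ²) = √((1−η²)/(1+ξ²))`, and in particular `|q_c| < 1`. -/
theorem complex_mehler_qc_modulus (η ξ : ℝ) (hη : |η| < 1)
    (w : ℝ) (hw : w = Real.sqrt ((1 + ξ ^ 2) * (1 - η ^ 2)))
    (qc : ℂ) (hqc : qc = ((η : ℂ) + (ξ : ℂ) * Complex.I) /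
      (1 + (w : ℂ) + (η : ℂ) * (ξ : ℂ) * Complex.I))
    (q₀ : ℝ) (hq₀ : q₀ = w / (1 + ξ ^ 2)) :
    ‖qc‖ ^ 2 = (η ^ 2 + ξ ^ 2) / ((1 + w) ^ 2 + η ^ 2 * ξ ^ 2) ∧
    ‖qc‖ ^ 2 = (1 + ξ ^ 2 - w) / (1 + ξ ^ 2 + w) ∧
    ‖qc‖ < 1 ∧
    q₀ = Real.sqrt ((1 - η ^ 2) / (1 + ξ ^ 2)) ∧
    ‖qc‖ ^ 2 = (1 - q₀) / (1 + q₀) := by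
  have hη2 : η ^ 2 < 1 := by nlinarith [abs_nonneg η, _root_.sq_abs η, abs_lt.1 hη]
  have hwpos : 0 < w := by
    rw [hw]; exact Real.sqrt_pos.2 (by nlinarith [sq_nonneg ξ])
  have hw2 : w ^ 2 = (1 + ξ ^ 2) * (1 - η ^ 2) := by
    rw [hw, Real.sq_sqrt (by nlinarith [sq_nonneg ξ])]
  have hxi : (0:ℝ) < 1 + ξ ^ 2 := by positivity
  have h1 : ‖qc‖ ^ 2 = (η ^ 2 + ξ ^ 2) / ((1 + w) ^ 2 + η ^ 2 * ξ ^ 2) := by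
    rw [hqc, Complex.sq_norm, map_div₀]
    simp [Complex.normSq_apply]
    ring_nf
  have hden : (0:ℝ) < (1 + w) ^ 2 + η ^ 2 * ξ ^ 2 := by positivity
  have h2 : ‖qc‖ ^ 2 = (1 + ξ ^ 2 - w) / (1 + ξ ^ 2 + w) := by
    rw [h1]
    rw [div_eq_div_iff hden.ne' (by positivity)]
    nlinarith [hw2]
  have h3 : ‖qc‖ < 1 := by
    have hsq : ‖qc‖ ^ 2 < 1 := by
      rw [h2, div_lt_one (by positivity)]; linarith
    nlinarith [norm_nonneg qc]
  have hq0nn : 0 ≤ q₀ := by rw [hq₀]; positivity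
  have h4 : q₀ = Real.sqrt ((1 - η ^ 2) / (1 + ξ ^ 2)) := by
    have : q₀ ^ 2 = (1 - η ^ 2) / (1 + ξ ^ 2) := by
      rw [hq₀]; field_simp; nlinarith [hw2]
    rw [← this, Real.sqrt_sq hq0nn]
  have h5 : ‖qc‖ ^ 2 = (1 - q₀) / (1 + q₀) := by
    rw [h2, hq₀]
    rw [div_eq_div_iff (by positivity) (by positivity)]
    field_simp
  exact ⟨h1, h2, h3, h4, h5⟩
end

section
/- Let R be an n×n complex matrix. Then the matrix exponential of the 2n×2n block matrix fromBlocks 0 R R 0 equals fromBlocks (cosh R) (sinh R) (sinh R) (cosh R), where cosh R = (exp R + exp(−R))/2 and sinh R = (exp R − exp(−R))/2 are defined via the matrix exponential. -/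
open Matrix NormedSpace

/-- exp preserves reindexing by an equiv. -/
theorem exp_reindex_aux {m l : Type*} [Fintype m] [DecidableEq m] [Fintype l] [DecidableEq l]
    (e : m ≃ l) (M : Matrix m m ℂ) :
    NormedSpace.exp (reindex e e M) = reindex e e (NormedSpace.exp M) := by
  letI : SeminormedRing (Matrix m m ℂ) := Matrix.linftyOpSemiNormedRing
  letI : NormedRing (Matrix m m ℂ) := Matrix.linftyOpNormedRing
  letI : NormedAlgebra ℂ (Matrix m m ℂ) := Matrix.linftyOpNormedAlgebra
  letI : NormedAlgebra ℚ (Matrix m m ℂ) := Matrix.linftyOpNormedAlgebra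
  letI : SeminormedRing (Matrix l l ℂ) := Matrix.linftyOpSemiNormedRing
  letI : NormedRing (Matrix l l ℂ) := Matrix.linftyOpNormedRing
  letI : NormedAlgebra ℂ (Matrix l l ℂ) := Matrix.linftyOpNormedAlgebra
  letI : NormedAlgebra ℚ (Matrix l l ℂ) := Matrix.linftyOpNormedAlgebra
  exact (map_exp (Matrix.reindexAlgEquiv ℂ ℂ e : Matrix m m ℂ →+* Matrix l l ℂ)
    (by exact Continuous.matrix_submatrix continuous_id _ _) M).symm

theorem exp_fromBlocks_diag (n : ℕ) (A B : Matrix (Fin n) (Fin n) ℂ) :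
    NormedSpace.exp (fromBlocks A 0 0 B) =
      fromBlocks (NormedSpace.exp A) 0 0 (NormedSpace.exp B) := by
  classical
  let e : (Fin n) × Bool ≃ (Fin n) ⊕ (Fin n) :=
    (Equiv.prodComm _ _).trans (Equiv.boolProdEquivSum (Fin n))
  have key : ∀ C D : Matrix (Fin n) (Fin n) ℂ,
      reindex e e (blockDiagonal (fun b => cond b D C)) = fromBlocks C 0 0 D := by
    intro C D
    ext i j
    rcases i with i | i <;> rcases j with j | j <;>
      simp [e, blockDiagonal_apply, Equiv.boolProdEquivSum, fromBlocks]
  rw [← key, exp_reindex_aux, Matrix.exp_blockDiagonal]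
  rw [show (NormedSpace.exp fun b => cond b B A) = fun b => cond b (NormedSpace.exp B) (NormedSpace.exp A) from ?_, key]
  · letI : SeminormedRing (Matrix (Fin n) (Fin n) ℂ) := Matrix.linftyOpSemiNormedRing
    letI : NormedRing (Matrix (Fin n) (Fin n) ℂ) := Matrix.linftyOpNormedRing
    letI : NormedAlgebra ℂ (Matrix (Fin n) (Fin n) ℂ) := Matrix.linftyOpNormedAlgebra
    letI : NormedAlgebra ℚ (Matrix (Fin n) (Fin n) ℂ) := Matrix.linftyOpNormedAlgebra
    letI : CompleteSpace (Matrix (Fin n) (Fin n) ℂ) := by infer_instance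
    erw [Pi.exp_def]
    funext b; cases b <;> rfl

/-- The symplectic matrix of the mode-wise squeezing transformation:
`exp (fromBlocks 0 R R 0) = fromBlocks (cosh R) (sinh R) (sinh R) (cosh R)` where
`cosh R = (exp R + exp(−R))/2` and `sinh R = (exp R − exp(−R))/2` via the matrix exponential. -/
theorem exp_fromBlocks_squeezing (n : ℕ) (R : Matrix (Fin n) (Fin n) ℂ) :
    NormedSpace.exp (Matrix.fromBlocks 0 R R 0) =
      Matrix.fromBlocks
        (((2 : ℂ)⁻¹) • (NormedSpace.exp R + NormedSpace.exp (-R)))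
        (((2 : ℂ)⁻¹) • (NormedSpace.exp R - NormedSpace.exp (-R)))
        (((2 : ℂ)⁻¹) • (NormedSpace.exp R - NormedSpace.exp (-R)))
        (((2 : ℂ)⁻¹) • (NormedSpace.exp R + NormedSpace.exp (-R))) := by
  classical
  set S : Matrix (Fin n ⊕ Fin n) (Fin n ⊕ Fin n) ℂ := fromBlocks 1 1 1 (-1) with hSdef
  have hmul : S * ((2 : ℂ)⁻¹ • S) = 1 := by
    rw [Matrix.mul_smul, hSdef, fromBlocks_multiply]
    ext i j
    rcases i with i | i <;> rcases j with j | j <;>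
      simp [fromBlocks, Matrix.one_apply] <;> ring_nf
  have hmul' : ((2 : ℂ)⁻¹ • S) * S = 1 := by
    rw [Matrix.smul_mul, hSdef, fromBlocks_multiply]
    ext i j
    rcases i with i | i <;> rcases j with j | j <;>
      simp [fromBlocks, Matrix.one_apply] <;> ring_nf
  have hUnit : IsUnit S := ⟨⟨S, (2 : ℂ)⁻¹ • S, hmul, hmul'⟩, rfl⟩
  have hinv : S⁻¹ = (2 : ℂ)⁻¹ • S := Matrix.inv_eq_right_inv hmul
  have hconj : fromBlocks (0 : Matrix (Fin n) (Fin n) ℂ) R R 0 =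
      S * fromBlocks R 0 0 (-R) * S⁻¹ := by
    rw [hinv, Matrix.mul_smul, hSdef, fromBlocks_multiply, fromBlocks_multiply]
    ext i j
    rcases i with i | i <;> rcases j with j | j <;>
      simp [fromBlocks, two_smul] <;> ring
  rw [hconj, Matrix.exp_conj S _ hUnit, exp_fromBlocks_diag, hinv,
    Matrix.mul_smul, hSdef, fromBlocks_multiply, fromBlocks_multiply]
  ext i j
  rcases i with i | i <;> rcases j with j | j <;>
    simp [fromBlocks, Matrix.sub_apply, smul_sub, smul_add] <;> ring
end

section
/- Let V be a unitary n×n complex matrix and R an n×n complex matrix with conj R = R (R real-entried, e.g. a real diagonal matrix of squeezing eigenvalues). Then exp(fromBlocks 0 (V·R·Vᵀ) ((conj V)·R·Vᴴ) 0) = M · exp(fromBlocks 0 R R 0) · Mᴴ, where M = fromBlocks V 0 0 (conj V). In particular, if −iH_I = V·R·Vᵀ is a Takagi factorization of the squeezing matrix, then the first-order Magnus symplectic matrix S₁ = exp(fromBlocks 0 (−iH_I) (i·conj H_I) 0) admits the Bloch-Messiah reduction S₁ = M · exp(fromBlocks 0 R R 0) · Mᴴ with equal input and output passive transformations. -/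
open Matrix

/-- Bloch-Messiah reduction of the first-order Magnus symplectic matrix: if `V` is unitary and
`conj R = R`, then `exp (fromBlocks 0 (V·R·Vᵀ) ((conj V)·R·Vᴴ) 0) =
M · exp (fromBlocks 0 R R 0) · Mᴴ` with `M = fromBlocks V 0 0 (conj V)`; in particular, for a
Takagi factorization `−iH_I = V·R·Vᵀ` the symplectic matrix `S₁` admits a Bloch-Messiah reduction
with equal input and output passive transformations. -/
theorem first_order_magnus_bloch_messiah (n : ℕ)
    (V : Matrix (Fin n) (Fin n) ℂ)
    (hV : V ∈ Matrix.unitaryGroup (Fin n) ℂ)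
    (R : Matrix (Fin n) (Fin n) ℂ)
    (hR : R.map (starRingEnd ℂ) = R)
    (M : Matrix (Fin n ⊕ Fin n) (Fin n ⊕ Fin n) ℂ)
    (hM : M = Matrix.fromBlocks V 0 0 (V.map (starRingEnd ℂ))) :
    NormedSpace.exp
        (Matrix.fromBlocks 0 (V * R * Vᵀ) ((V.map (starRingEnd ℂ)) * R * Vᴴ) 0) =
      M * NormedSpace.exp (Matrix.fromBlocks 0 R R 0) * Mᴴ := by
  have hV1 : V * Vᴴ = 1 := hV.2
  have hV2 : Vᴴ * V = 1 := hV.1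
  have hVc : V.map (starRingEnd ℂ) = (Vᴴ)ᵀ := by
    ext i j; simp [conjTranspose_apply]
  have hVt : (V.map (starRingEnd ℂ))ᴴ = Vᵀ := by
    ext i j; simp [conjTranspose_apply]
  have hW1 : (V.map (starRingEnd ℂ)) * (V.map (starRingEnd ℂ))ᴴ = 1 := by
    rw [hVt, hVc, ← transpose_mul, hV1, transpose_one]
  have hW2 : (V.map (starRingEnd ℂ))ᴴ * (V.map (starRingEnd ℂ)) = 1 := by
    rw [hVt, hVc, ← transpose_mul, hV2, transpose_one]
  have hMu1 : M * Mᴴ = 1 := by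
    rw [hM, fromBlocks_conjTranspose, fromBlocks_multiply]
    simp [hV1, hW1, fromBlocks_one]
  have hMu2 : Mᴴ * M = 1 := by
    rw [hM, fromBlocks_conjTranspose, fromBlocks_multiply]
    simp [hV2, hW2, fromBlocks_one]
  set U : (Matrix (Fin n ⊕ Fin n) (Fin n ⊕ Fin n) ℂ)ˣ := ⟨M, Mᴴ, hMu1, hMu2⟩ with hU
  have key : Matrix.fromBlocks 0 (V * R * Vᵀ) ((V.map (starRingEnd ℂ)) * R * Vᴴ) 0
      = M * (Matrix.fromBlocks 0 R R 0) * Mᴴ := by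
    rw [hM, fromBlocks_conjTranspose, fromBlocks_multiply, fromBlocks_multiply]
    simp [hVt, Matrix.mul_assoc]
  rw [key]
  have := Matrix.exp_units_conj U (Matrix.fromBlocks 0 R R 0)
  simpa [hU] using this
end

section
/- Let V and W be unitary n×n complex matrices and R an n×n complex matrix with conj R = R and Rᵀ = R (R real symmetric, e.g. a real diagonal matrix of squeezing eigenvalues). Set M = fromBlocks V 0 0 (conj V), Q = fromBlocks W 0 0 (conj W), and S = M · exp(fromBlocks 0 R R 0) · Qᴴ. Then S·Sᴴ = fromBlocks (V·cosh(2R)·Vᴴ) (V·sinh(2R)·Vᵀ) ((conj V)·sinh(2R)·Vᴴ) ((conj V)·cosh(2R)·Vᵀ), where cosh(2R) = (exp(2R) + exp(−2R))/2 and sinh(2R) = (exp(2R) − exp(−2R))/2. Consequently, the covariance matrix (1/2)·S·Sᴴ of the output of unseeded parametric downconversion has phase-insensitive block Σ'₀ = (1/2)·V·cosh(2R)·Vᴴ and phase-sensitive block Σ'_I = (1/2)·V·sinh(2R)·Vᵀ. -/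
open Matrix

/-- exp of a block-diagonal 2x2 block matrix. -/
lemma exp_fromBlocks_diag_s17 (n : ℕ) (X Y : Matrix (Fin n) (Fin n) ℂ) :
    NormedSpace.exp (Matrix.fromBlocks X 0 0 Y) =
      Matrix.fromBlocks (NormedSpace.exp X) 0 0 (NormedSpace.exp Y) := by
  letI : SeminormedRing (Matrix (Fin n) (Fin n) ℂ) := Matrix.linftyOpSemiNormedRing
  letI : NormedRing (Matrix (Fin n) (Fin n) ℂ) := Matrix.linftyOpNormedRing
  letI : NormedAlgebra ℂ (Matrix (Fin n) (Fin n) ℂ) := Matrix.linftyOpNormedAlgebra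
  letI : NormedAlgebra ℚ (Matrix (Fin n) (Fin n) ℂ) := Matrix.linftyOpNormedAlgebra
  letI : SeminormedRing (Matrix (Fin n ⊕ Fin n) (Fin n ⊕ Fin n) ℂ) :=
    Matrix.linftyOpSemiNormedRing
  letI : NormedRing (Matrix (Fin n ⊕ Fin n) (Fin n ⊕ Fin n) ℂ) := Matrix.linftyOpNormedRing
  letI : NormedAlgebra ℂ (Matrix (Fin n ⊕ Fin n) (Fin n ⊕ Fin n) ℂ) :=
    Matrix.linftyOpNormedAlgebra
  let φ : (Matrix (Fin n) (Fin n) ℂ × Matrix (Fin n) (Fin n) ℂ) →ₐ[ℂ]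
      Matrix (Fin n ⊕ Fin n) (Fin n ⊕ Fin n) ℂ :=
    { toFun := fun p => Matrix.fromBlocks p.1 0 0 p.2
      map_one' := by simp [Prod.fst_one, Prod.snd_one, Matrix.fromBlocks_one]
      map_mul' := fun p q => by simp [Matrix.fromBlocks_multiply]
      map_zero' := by simp [Matrix.fromBlocks_zero]
      map_add' := fun p q => by simp [Matrix.fromBlocks_add]
      commutes' := fun r => by
        ext (i | i) (j | j) <;>
          simp [Matrix.algebraMap_matrix_apply, Prod.algebraMap_apply] }
  have hφc : Continuous φ := φ.toLinearMap.continuous_of_finiteDimensional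
  have h1 : φ (NormedSpace.exp ((X, Y) :
      Matrix (Fin n) (Fin n) ℂ × Matrix (Fin n) (Fin n) ℂ)) =
      NormedSpace.exp (φ (X, Y)) := NormedSpace.map_exp φ hφc _
  have h2 : NormedSpace.exp ((X, Y) :
      Matrix (Fin n) (Fin n) ℂ × Matrix (Fin n) (Fin n) ℂ) =
      (NormedSpace.exp X, NormedSpace.exp Y) :=
    Prod.ext (Prod.fst_exp _) (Prod.snd_exp _)
  rw [h2] at h1
  exact h1.symm


lemma exp_fromBlocks_offdiag (n : ℕ) (B : Matrix (Fin n) (Fin n) ℂ)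
    (hexp : NormedSpace.exp (Matrix.fromBlocks B 0 0 (-B)) =
      Matrix.fromBlocks (NormedSpace.exp B) 0 0 (NormedSpace.exp (-B))) :
    NormedSpace.exp (Matrix.fromBlocks 0 B B 0) =
      Matrix.fromBlocks
        (((2:ℂ)⁻¹) • (NormedSpace.exp B + NormedSpace.exp (-B)))
        (((2:ℂ)⁻¹) • (NormedSpace.exp B - NormedSpace.exp (-B)))
        (((2:ℂ)⁻¹) • (NormedSpace.exp B - NormedSpace.exp (-B)))
        (((2:ℂ)⁻¹) • (NormedSpace.exp B + NormedSpace.exp (-B))) := by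
  set U : Matrix (Fin n ⊕ Fin n) (Fin n ⊕ Fin n) ℂ :=
    Matrix.fromBlocks 1 1 1 (-1) with hU
  have hUU : U * (((2:ℂ)⁻¹) • U) = 1 := by
    rw [hU, Matrix.mul_smul, Matrix.fromBlocks_multiply]
    ext (i|i) (j|j) <;>
      simp [Matrix.fromBlocks, Matrix.one_apply, two_smul, smul_smul] <;> split_ifs <;> ring
  have hUU' : (((2:ℂ)⁻¹) • U) * U = 1 := by
    rw [hU, Matrix.smul_mul, Matrix.fromBlocks_multiply]
    ext (i|i) (j|j) <;>
      simp [Matrix.fromBlocks, Matrix.one_apply, two_smul, smul_smul] <;> split_ifs <;> ring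
  set Uu : (Matrix (Fin n ⊕ Fin n) (Fin n ⊕ Fin n) ℂ)ˣ :=
    ⟨U, ((2:ℂ)⁻¹) • U, hUU, hUU'⟩ with hUu
  have hconj : Matrix.fromBlocks 0 B B 0 =
      (Uu : Matrix (Fin n ⊕ Fin n) (Fin n ⊕ Fin n) ℂ) *
        (Matrix.fromBlocks B 0 0 (-B)) * ((Uu⁻¹ : _ˣ) : _) := by
    show Matrix.fromBlocks 0 B B 0 = U * (Matrix.fromBlocks B 0 0 (-B)) * (((2:ℂ)⁻¹) • U)
    rw [hU, Matrix.mul_smul, Matrix.fromBlocks_multiply, Matrix.fromBlocks_multiply]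
    ext (i|i) (j|j) <;>
      simp [Matrix.fromBlocks, two_smul, smul_smul, Matrix.add_apply, Matrix.smul_apply,
        two_mul] <;> ring_nf <;>
      simp [Matrix.smul_apply, Matrix.add_apply, two_mul]
  rw [hconj, Matrix.exp_units_conj Uu, hexp]
  show U * _ * (((2:ℂ)⁻¹) • U) = _
  rw [Matrix.mul_smul, hU, Matrix.fromBlocks_multiply, Matrix.fromBlocks_multiply]
  ext (i|i) (j|j) <;>
    simp [Matrix.fromBlocks, Matrix.smul_apply, Matrix.add_apply, Matrix.sub_apply,
      Matrix.neg_apply, mul_comm, sub_eq_add_neg] <;> ring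

/-- Covariance matrix of unseeded PDC output: for `S = M·exp(fromBlocks 0 R R 0)·Qᴴ` in
Bloch-Messiah form with `V`, `W` unitary and `R` real symmetric,
`S·Sᴴ = fromBlocks (V·cosh(2R)·Vᴴ) (V·sinh(2R)·Vᵀ) ((conj V)·sinh(2R)·Vᴴ) ((conj V)·cosh(2R)·Vᵀ)`;
consequently the covariance `(1/2)·S·Sᴴ` has phase-insensitive block `(1/2)·V·cosh(2R)·Vᴴ` and
phase-sensitive block `(1/2)·V·sinh(2R)·Vᵀ`. -/

theorem pdc_output_covariance (n : ℕ)
    (V W : Matrix (Fin n) (Fin n) ℂ)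
    (hV : V ∈ Matrix.unitaryGroup (Fin n) ℂ)
    (hW : W ∈ Matrix.unitaryGroup (Fin n) ℂ)
    (R : Matrix (Fin n) (Fin n) ℂ)
    (hRc : R.map (starRingEnd ℂ) = R) (hRs : Rᵀ = R)
    (M Q S : Matrix (Fin n ⊕ Fin n) (Fin n ⊕ Fin n) ℂ)
    (hM : M = Matrix.fromBlocks V 0 0 (V.map (starRingEnd ℂ)))
    (hQ : Q = Matrix.fromBlocks W 0 0 (W.map (starRingEnd ℂ)))
    (hS : S = M * NormedSpace.exp (Matrix.fromBlocks 0 R R 0) * Qᴴ)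
    (coshTwoR sinhTwoR : Matrix (Fin n) (Fin n) ℂ)
    (hcosh : coshTwoR = ((2 : ℂ)⁻¹) •
      (NormedSpace.exp (2 • R) + NormedSpace.exp (-(2 • R))))
    (hsinh : sinhTwoR = ((2 : ℂ)⁻¹) •
      (NormedSpace.exp (2 • R) - NormedSpace.exp (-(2 • R)))) :
    S * Sᴴ = Matrix.fromBlocks
        (V * coshTwoR * Vᴴ) (V * sinhTwoR * Vᵀ)
        ((V.map (starRingEnd ℂ)) * sinhTwoR * Vᴴ)
        ((V.map (starRingEnd ℂ)) * coshTwoR * Vᵀ) ∧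
    (((1 : ℂ) / 2) • (S * Sᴴ)).toBlocks₁₁ = ((1 : ℂ) / 2) • (V * coshTwoR * Vᴴ) ∧
    (((1 : ℂ) / 2) • (S * Sᴴ)).toBlocks₁₂ = ((1 : ℂ) / 2) • (V * sinhTwoR * Vᵀ) := by
  have hRH : Rᴴ = R := by
    have : Rᴴ = (Rᵀ).map (starRingEnd ℂ) := by
      ext i j; simp [Matrix.conjTranspose_apply, Matrix.map_apply]
    rw [this, hRs, hRc]
  set E := NormedSpace.exp (Matrix.fromBlocks 0 R R 0) with hE
  have hEH : Eᴴ = E := by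
    rw [hE, ← Matrix.exp_conjTranspose, Matrix.fromBlocks_conjTranspose]
    simp [hRH]
  have hQQ : Qᴴ * Q = 1 := by
    have hWmap : (W.map (starRingEnd ℂ))ᴴ = Wᵀ := by
      ext i j; simp [Matrix.conjTranspose_apply, Matrix.map_apply]
    have hW1 : Wᴴ * W = 1 := by
      have := hW.1
      rwa [Matrix.star_eq_conjTranspose] at this
    have hW2 : Wᵀ * (W.map (starRingEnd ℂ)) = 1 := by
      have : Wᵀ * (W.map (starRingEnd ℂ)) = (Wᴴ * W).map (starRingEnd ℂ) := by
        ext i j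
        simp [Matrix.mul_apply, Matrix.map_apply, Matrix.conjTranspose_apply, map_sum]
      rw [this, hW1]
      ext i j; simp [Matrix.map_apply, Matrix.one_apply, apply_ite]
    rw [hQ, Matrix.fromBlocks_conjTranspose, Matrix.fromBlocks_multiply, hWmap]
    simp [hW1, hW2, Matrix.fromBlocks_one]
  have hEE : E * E = NormedSpace.exp (Matrix.fromBlocks 0 (2 • R) (2 • R) 0) := by
    rw [hE, ← Matrix.exp_add_of_commute _ _ (Commute.refl _)]
    congr 1
    rw [Matrix.fromBlocks_add]
    congr 1 <;> simp [two_smul]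
  have hEblocks : NormedSpace.exp (Matrix.fromBlocks 0 (2 • R) (2 • R) 0) =
      Matrix.fromBlocks coshTwoR sinhTwoR sinhTwoR coshTwoR := by
    rw [exp_fromBlocks_offdiag n (2 • R) (exp_fromBlocks_diag_s17 n (2 • R) (-(2 • R))),
      hcosh, hsinh]
  have hMH : Mᴴ = Matrix.fromBlocks Vᴴ 0 0 Vᵀ := by
    rw [hM, Matrix.fromBlocks_conjTranspose]
    congr 1 <;> try simp
    ext i j; simp [Matrix.conjTranspose_apply, Matrix.map_apply]
  have key : S * Sᴴ = Matrix.fromBlocks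
      (V * coshTwoR * Vᴴ) (V * sinhTwoR * Vᵀ)
      ((V.map (starRingEnd ℂ)) * sinhTwoR * Vᴴ)
      ((V.map (starRingEnd ℂ)) * coshTwoR * Vᵀ) := by
    rw [hS]
    rw [Matrix.conjTranspose_mul, Matrix.conjTranspose_mul, Matrix.conjTranspose_conjTranspose]
    calc M * E * Qᴴ * (Q * (Eᴴ * Mᴴ)) = M * (E * ((Qᴴ * Q) * (Eᴴ * Mᴴ))) := by
          simp only [Matrix.mul_assoc]
      _ = M * ((E * E) * Mᴴ) := by rw [hQQ, Matrix.one_mul, hEH, Matrix.mul_assoc]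
      _ = M * (Matrix.fromBlocks coshTwoR sinhTwoR sinhTwoR coshTwoR * Mᴴ) := by
          rw [hEE, hEblocks]
      _ = _ := by
          rw [hMH, hM, Matrix.fromBlocks_multiply, Matrix.fromBlocks_multiply]
          simp [Matrix.mul_assoc]
  refine ⟨key, ?_, ?_⟩ <;> rw [key] <;>
    · ext i j
      simp [Matrix.toBlocks₁₁, Matrix.toBlocks₁₂, Matrix.fromBlocks]
end

section
/- Let η and ξ be real numbers with |η| < 1. Then |p_c|² = 2w·√(1+ξ²)/(1 + ξ² + w); equivalently, (1 + ξ² + w)² = (1 + ξ²)·((1 + w)² + η²ξ²), and hence |p_c|² = (1 − |q_c|²)·√(1+ξ²), i.e. |p_c| = p·(1+ξ²)^{1/4} where p = √(1 − |q_c|²). -/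
open Complex

/-- Modulus of `p_c`, the principal square root of `2w/(1+w+iηξ)`:
`|p_c|² = 2w√(1+ξ²)/(1+ξ²+w)`, equivalently `(1+ξ²+w)² = (1+ξ²)((1+w)²+η²ξ²)`, and hence
`|p_c|² = (1−|q_c|²)·√(1+ξ²)`, i.e. `|p_c| = p·(1+ξ²)^{1/4}` with `p = √(1−|q_c|²)`. -/
theorem complex_mehler_pc_modulus (η ξ : ℝ) (hη : |η| < 1)
    (w : ℝ) (hw : w = Real.sqrt ((1 + ξ ^ 2) * (1 - η ^ 2)))
    (qc : ℂ) (hqc : qc = ((η : ℂ) + (ξ : ℂ) * Complex.I) /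
      (1 + (w : ℂ) + (η : ℂ) * (ξ : ℂ) * Complex.I))
    (pc : ℂ) (hpc : pc = (2 * (w : ℂ) /
      (1 + (w : ℂ) + (η : ℂ) * (ξ : ℂ) * Complex.I)) ^ ((1 : ℂ) / 2)) :
    ‖pc‖ ^ 2 = 2 * w * Real.sqrt (1 + ξ ^ 2) / (1 + ξ ^ 2 + w) ∧
    (1 + ξ ^ 2 + w) ^ 2 = (1 + ξ ^ 2) * ((1 + w) ^ 2 + η ^ 2 * ξ ^ 2) ∧
    ‖pc‖ ^ 2 = (1 - ‖qc‖ ^ 2) * Real.sqrt (1 + ξ ^ 2) ∧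
    ‖pc‖ = Real.sqrt (1 - ‖qc‖ ^ 2) * (1 + ξ ^ 2) ^ ((1 : ℝ) / 4) := by
  have hη2 : η ^ 2 < 1 := by nlinarith [_root_.sq_abs η, abs_nonneg η]
  have hA : (0:ℝ) < 1 + ξ ^ 2 := by positivity
  have hw0 : 0 < w := by
    rw [hw]; exact Real.sqrt_pos.mpr (by nlinarith)
  have hwsq : w ^ 2 = (1 + ξ ^ 2) * (1 - η ^ 2) := by
    rw [hw, sq, Real.mul_self_sqrt (by nlinarith)]
  set N : ℝ := (1 + w) ^ 2 + η ^ 2 * ξ ^ 2 with hN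
  have hN0 : 0 < N := by positivity
  have hid : (1 + ξ ^ 2 + w) ^ 2 = (1 + ξ ^ 2) * N := by
    rw [hN]; nlinarith [hwsq]
  set D : ℂ := 1 + (w : ℂ) + (η : ℂ) * (ξ : ℂ) * Complex.I with hD
  have hDabs : ‖D‖ = Real.sqrt N := by
    rw [hD]
    rw [Complex.norm_def, Complex.normSq_apply]
    simp [hN]
    ring_nf
  have hDne : D ≠ 0 := by
    intro h
    have h2 := hDabs
    rw [h] at h2
    simp at h2
    have h3 := Real.sqrt_pos.mpr hN0
    linarith
  have hsA : Real.sqrt (1 + ξ ^ 2) > 0 := Real.sqrt_pos.mpr hA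
  have hsA2 : Real.sqrt (1 + ξ ^ 2) ^ 2 = 1 + ξ ^ 2 := Real.sq_sqrt hA.le
  have hsN : Real.sqrt N = (1 + ξ ^ 2 + w) / Real.sqrt (1 + ξ ^ 2) := by
    rw [eq_div_iff (ne_of_gt hsA)]
    have : Real.sqrt N * Real.sqrt (1 + ξ ^ 2) = Real.sqrt (N * (1 + ξ ^ 2)) := by
      rw [← Real.sqrt_mul hN0.le]
    rw [this, mul_comm N, ← hid, Real.sqrt_sq (by positivity)]
  -- abs pc
  have hzabs : ‖2 * (w : ℂ) / D‖ = 2 * w / Real.sqrt N := by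
    rw [norm_div, hDabs]
    congr 1
    rw [norm_mul]
    simp [Complex.norm_real, abs_of_pos hw0]
  have hzne : 2 * (w : ℂ) / D ≠ 0 := by
    apply div_ne_zero _ hDne
    simp [ne_of_gt hw0]
  have hpcabs : ‖pc‖ = (2 * w / Real.sqrt N) ^ ((1:ℝ)/2) := by
    rw [hpc]
    have h12 : ((1:ℂ)/2) = (((1:ℝ)/2 : ℝ) : ℂ) := by norm_num
    rw [h12, Complex.norm_cpow_real, hzabs]
  have hval : (0:ℝ) ≤ 2 * w / Real.sqrt N := by positivity
  have hpcsq : ‖pc‖ ^ 2 = 2 * w / Real.sqrt N := by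
    rw [hpcabs, ← Real.rpow_natCast (_ ^ ((1:ℝ)/2)) 2, ← Real.rpow_mul hval]
    norm_num
  have part1 : ‖pc‖ ^ 2 = 2 * w * Real.sqrt (1 + ξ ^ 2) / (1 + ξ ^ 2 + w) := by
    rw [hpcsq, hsN]
    rw [div_div_eq_mul_div, div_eq_div_iff (by positivity) (by positivity)]
    try ring
  -- qc
  have hqcsq : ‖qc‖ ^ 2 = (η ^ 2 + ξ ^ 2) / N := by
    rw [hqc, norm_div, hDabs, div_pow, Real.sq_sqrt hN0.le]
    congr 1
    rw [← Complex.normSq_eq_norm_sq, Complex.normSq_apply]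
    simp
    ring
  have part3 : ‖pc‖ ^ 2 = (1 - ‖qc‖ ^ 2) * Real.sqrt (1 + ξ ^ 2) := by
    rw [hpcsq, hqcsq, hsN]
    rw [div_div_eq_mul_div, div_eq_iff (by positivity)]
    have key : (1 - (η ^ 2 + ξ ^ 2) / N) = 2 * w / (1 + ξ ^ 2 + w) := by
      rw [sub_div' (ne_of_gt hN0), div_eq_div_iff (ne_of_gt hN0) (by positivity)]
      nlinarith [hwsq]
    rw [key]
    field_simp
    try ring
  have hq1 : 0 ≤ 1 - ‖qc‖ ^ 2 := by
    have h1 : 0 ≤ ‖pc‖ ^ 2 := by positivity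
    rw [part3] at h1
    nlinarith
  refine ⟨part1, hid, part3, ?_⟩
  have : ‖pc‖ = Real.sqrt (‖pc‖ ^ 2) := by
    rw [Real.sqrt_sq (norm_nonneg pc)]
  rw [this, part3, Real.sqrt_mul hq1]
  congr 1
  rw [Real.sqrt_eq_rpow, Real.sqrt_eq_rpow, ← Real.rpow_mul hA.le]
  norm_num
end
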